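/- The family {f_n : n ≥ 1} with f_n(z) = e^{nz} - z^{k-1}/n^k + z^{k-1} is not normal on the unit disk: there is no subsequence converging locally uniformly (in the spherical metric) on the unit disk to a holomorphic function or to ∞. -/

import Mathlib

open Filter Metric

/-- The family `f_n(z) = e^{nz} - z^{k-1}/n^k + z^{k-1}` (n ≥ 1) is not normal on the
unit disk: no subsequence converges locally uniformly to a holomorphic function, nor
uniformly to ∞ on compact subsets. -/
theorem stmt_5 (k : ℕ) (hk : 1 ≤ k) (f : ℕ → ℂ → ℂ)
    (hf : ∀ n : ℕ, ∀ z : ℂ, f n z =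
      Complex.exp (((n : ℂ) + 1) * z) - z ^ (k - 1) / ((n : ℂ) + 1) ^ k + z ^ (k - 1)) :
    ¬ ∃ φ : ℕ → ℕ, StrictMono φ ∧
      ((∃ g : ℂ → ℂ, DifferentiableOn ℂ g (ball (0 : ℂ) 1) ∧
          TendstoLocallyUniformlyOn (fun m => f (φ m)) g atTop (ball (0 : ℂ) 1)) ∨
        (∀ K : Set ℂ, K ⊆ ball (0 : ℂ) 1 → IsCompact K →
          ∀ M : ℝ, ∀ᶠ m in atTop, ∀ z ∈ K, M ≤ ‖f (φ m) z‖)) := by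
  rintro ⟨φ, hφ, hcase⟩
  -- basic norm estimates for the two correction terms at any point of norm ≤ 1
  have hsmall : ∀ n : ℕ, ∀ z : ℂ, ‖z‖ ≤ 1 →
      ‖z ^ (k - 1) / ((n : ℂ) + 1) ^ k‖ ≤ 1 ∧ ‖z ^ (k - 1)‖ ≤ 1 := by
    intro n z hz
    have hzpow : ‖z ^ (k - 1)‖ ≤ 1 := by
      rw [norm_pow]; exact pow_le_one₀ (norm_nonneg z) hz
    refine ⟨?_, hzpow⟩
    rw [norm_div]
    have hden : (1 : ℝ) ≤ ‖((n : ℂ) + 1) ^ k‖ := by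
      rw [norm_pow]
      apply one_le_pow₀
      have : ((n : ℂ) + 1) = ((n + 1 : ℕ) : ℂ) := by push_cast; ring
      rw [this, Complex.norm_natCast]
      exact_mod_cast Nat.one_le_iff_ne_zero.mpr (Nat.succ_ne_zero n)
    calc ‖z ^ (k - 1)‖ / ‖((n : ℂ) + 1) ^ k‖ ≤ ‖z ^ (k - 1)‖ / 1 := by
          apply div_le_div_of_nonneg_left (norm_nonneg _) one_pos hden |>.trans_eq rfl
      _ ≤ 1 := by simpa using hzpow
  rcases hcase with ⟨g, _, hconv⟩ | hbig
  · -- Case 1: locally uniform convergence to g; contradiction at z = 1/2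
    have hmem : (1/2 : ℂ) ∈ ball (0 : ℂ) 1 := by
      simp [mem_ball, dist_eq_norm]
      norm_num
    have hpt : Tendsto (fun m => f (φ m) (1/2 : ℂ)) atTop (nhds (g (1/2))) :=
      hconv.tendsto_at hmem
    have hnorm : Tendsto (fun m => ‖f (φ m) (1/2 : ℂ)‖) atTop (nhds ‖g (1/2)‖) :=
      hpt.norm
    have hlow : ∀ m : ℕ, Real.exp ((m + 1) / 2) - 2 ≤ ‖f (φ m) (1/2 : ℂ)‖ := by
      intro m
      have hz : ‖(1/2 : ℂ)‖ ≤ 1 := by norm_num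
      obtain ⟨h1, h2⟩ := hsmall (φ m) (1/2 : ℂ) hz
      have hexp : ‖Complex.exp (((φ m : ℂ) + 1) * (1/2))‖ = Real.exp ((φ m + 1) / 2) := by
        rw [Complex.norm_exp]
        congr 1
        have : (((φ m : ℂ) + 1) * (1/2)) = (((φ m : ℝ) + 1) / 2 : ℝ) := by
          push_cast; ring
        rw [this, Complex.ofReal_re]
      have tri : ‖Complex.exp (((φ m : ℂ) + 1) * (1/2))‖ ≤
          ‖f (φ m) (1/2 : ℂ)‖ + ‖(1/2 : ℂ) ^ (k - 1) / ((φ m : ℂ) + 1) ^ k‖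
            + ‖(1/2 : ℂ) ^ (k - 1)‖ := by
        rw [hf]
        calc ‖Complex.exp (((φ m : ℂ) + 1) * (1/2))‖
            = ‖(Complex.exp (((φ m : ℂ) + 1) * (1/2))
                - (1/2 : ℂ) ^ (k - 1) / ((φ m : ℂ) + 1) ^ k + (1/2 : ℂ) ^ (k - 1))
                + (1/2 : ℂ) ^ (k - 1) / ((φ m : ℂ) + 1) ^ k - (1/2 : ℂ) ^ (k - 1)‖ := by
              ring_nf
          _ ≤ _ := by
              refine (norm_sub_le _ _).trans ?_
              gcongr
              exact norm_add_le _ _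
      have hφm : (m : ℝ) ≤ (φ m : ℝ) := by exact_mod_cast hφ.le_apply
      have : Real.exp ((m + 1) / 2) ≤ ‖f (φ m) (1/2 : ℂ)‖ + 2 := by
        calc Real.exp ((m + 1) / 2) ≤ Real.exp ((φ m + 1) / 2) := by
              apply Real.exp_le_exp.mpr; linarith
          _ = ‖Complex.exp (((φ m : ℂ) + 1) * (1/2))‖ := hexp.symm
          _ ≤ ‖f (φ m) (1/2 : ℂ)‖ + ‖(1/2 : ℂ) ^ (k - 1) / ((φ m : ℂ) + 1) ^ k‖
                + ‖(1/2 : ℂ) ^ (k - 1)‖ := tri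
          _ ≤ ‖f (φ m) (1/2 : ℂ)‖ + 1 + 1 := by gcongr
          _ = ‖f (φ m) (1/2 : ℂ)‖ + 2 := by ring
      linarith
    have htop : Tendsto (fun m : ℕ => ‖f (φ m) (1/2 : ℂ)‖) atTop atTop := by
      apply tendsto_atTop_mono hlow
      apply Filter.Tendsto.atTop_add _ tendsto_const_nhds
      apply Real.tendsto_exp_atTop.comp
      apply Tendsto.atTop_div_const (by norm_num)
      exact tendsto_atTop_add_const_right _ _ tendsto_natCast_atTop_atTop
    exact not_tendsto_atTop_of_tendsto_nhds hnorm htop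
  · -- Case 2: uniform divergence to ∞; contradiction at z = 0 where ‖f n 0‖ ≤ 3
    have h0 : (0 : ℂ) ∈ ball (0 : ℂ) 1 := by simp
    have := hbig {0} (by simpa using h0) isCompact_singleton 4
    obtain ⟨m, hm⟩ := this.exists
    have h4 : (4 : ℝ) ≤ ‖f (φ m) 0‖ := hm 0 rfl
    have h3 : ‖f (φ m) 0‖ ≤ 3 := by
      rw [hf]
      obtain ⟨h1, h2⟩ := hsmall (φ m) 0 (by simp)
      calc ‖Complex.exp (((φ m : ℂ) + 1) * 0) - (0:ℂ) ^ (k - 1) / ((φ m : ℂ) + 1) ^ k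
            + (0:ℂ) ^ (k - 1)‖
          ≤ ‖Complex.exp (((φ m : ℂ) + 1) * 0) - (0:ℂ) ^ (k - 1) / ((φ m : ℂ) + 1) ^ k‖
            + ‖(0:ℂ) ^ (k - 1)‖ := norm_add_le _ _
        _ ≤ ‖Complex.exp (((φ m : ℂ) + 1) * 0)‖
            + ‖(0:ℂ) ^ (k - 1) / ((φ m : ℂ) + 1) ^ k‖ + ‖(0:ℂ) ^ (k - 1)‖ := by
            gcongr; exact norm_sub_le _ _
        _ ≤ 1 + 1 + 1 := by
            gcongr
            simp [Complex.norm_exp]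
        _ = 3 := by norm_num
    linarith
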